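/- Let q = 2^n, F = GF(q^4), and d = q^3 + q^2 + q - 1. The set of x ∈ F satisfying x^d + (x+1)^d = 1 is exactly the subfield GF(q^2) of F. -/
import Mathlib


theorem solutions_b_eq_one (n : ℕ) (hn : 0 < n) (F : Type) [Field F] [Fintype F]
    (hF : Fintype.card F = (2^n)^4) :
    {x : F | x ^ ((2^n)^3 + (2^n)^2 + 2^n - 1) + (x + 1) ^ ((2^n)^3 + (2^n)^2 + 2^n - 1) = 1}
      = {x : F | x ^ ((2^n)^2) = x} := by
  have h1q : (1:ℕ) ≤ 2^n := Nat.one_le_two_pow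
  -- characteristic 2
  have two : (2:F) = 0 := by
    have h := FiniteField.cast_card_eq_zero F
    rw [hF] at h
    push_cast at h
    rw [← pow_mul] at h
    exact pow_eq_zero_iff (show n*4 ≠ 0 by omega) |>.mp h
  haveI hC2 : CharP F 2 := by
    have hd : ringChar F ∣ 2 := ringChar.dvd (by exact_mod_cast two)
    rcases Nat.prime_two.eq_one_or_self_of_dvd _ hd with h1 | h2
    · exfalso
      haveI := ringChar.charP F
      rw [h1] at this
      exact CharP.char_ne_one F 1 rfl
    · have := ringChar.charP F
      rwa [h2] at this
  haveI : Fact (Nat.Prime 2) := ⟨Nat.prime_two⟩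
  set q := 2^n with hq
  have h2q : 2 ≤ q := by
    calc 2 = 2^1 := rfl
    _ ≤ 2^n := Nat.pow_le_pow_right (by norm_num) hn
  have hfrob : ∀ y z : F, (y + z) ^ q = y ^ q + z ^ q := fun y z =>
    add_pow_char_pow y z 2 n
  have hpow2 : ∀ y : F, (y^2)^q = (y^q)^2 := fun y => pow_right_comm y 2 q
  have hcardpow : ∀ y : F, y ^ (q^4) = y := by
    intro y
    rw [← hF]
    exact FiniteField.pow_card y
  set D := q^3 + q^2 + q - 1 with hD
  have hD1 : D + 1 = q^3 + q^2 + q := by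
    rw [hD]
    exact Nat.sub_add_cancel (le_trans h1q (Nat.le_add_left q (q^3+q^2)))
  have hDq : q ≤ D + 1 := by rw [hD1]; exact Nat.le_add_left q _
  have hD0 : D ≠ 0 := by omega
  have hq2 : q^2 ≠ 0 := by positivity
  ext x
  simp only [Set.mem_setOf_eq]
  by_cases hx0 : x = 0
  · subst hx0
    constructor <;> intro _
    · exact zero_pow hq2
    · rw [zero_pow hD0, zero_add, zero_add, one_pow]
  · by_cases hx1 : x = 1
    · subst hx1
      have h11 : (1:F) + 1 = 0 := by linear_combination two
      constructor <;> intro _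
      · exact one_pow _
      · rw [one_pow, h11, zero_pow hD0, add_zero]
    · have hxx1 : x + 1 ≠ 0 := by
        intro h
        apply hx1
        have hm : (-1:F) = 1 := by linear_combination (-1:F) * two
        linear_combination h + hm
      set a := x ^ q with ha
      set b := a ^ q with hb
      set c := b ^ q with hc
      have hbx : x ^ (q^2) = b := by
        rw [hb, ha, show q^2 = q*q from by ring, pow_mul]
      have hc3 : x ^ (q^3) = c := by
        rw [hc, hb, ha, show q^3 = q*q*q from by ring, pow_mul, pow_mul]
      have hcx : c ^ q = x := by
        have h4' : x ^ (q^4) = (((x^q)^q)^q)^q := by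
          rw [show q^4 = q*q*q*q from by ring, pow_mul, pow_mul, pow_mul]
        rw [hc, hb, ha, ← h4']
        exact hcardpow x
      have e1 : x ^ (q^3 + q^2 + q) = c * b * a := by
        rw [pow_add, pow_add, hc3, hbx, ← ha]
      have g1 : (x+1) ^ q = a + 1 := by rw [hfrob, one_pow, ← ha]
      have g2 : (x+1) ^ (q^2) = b + 1 := by
        rw [show q^2 = q*q from by ring, pow_mul, g1, hfrob, one_pow, ← hb]
      have g3 : (x+1) ^ (q^3) = c + 1 := by
        rw [show q^3 = q^2*q from by ring, pow_mul, g2, hfrob, one_pow, ← hc]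
      have f1 : (x+1) ^ (q^3 + q^2 + q) = (c+1) * (b+1) * (a+1) := by
        rw [pow_add, pow_add, g3, g2, g1]
      have e3 : x ^ D * x = c * b * a := by
        rw [← pow_succ, hD1]
        exact e1
      have f3 : (x+1) ^ D * (x+1) = (c+1) * (b+1) * (a+1) := by
        rw [← pow_succ, hD1]
        exact f1
      constructor
      · intro hE0
        have h := congrArg (fun y : F => x*(x+1)*y) hE0
        simp only [mul_one] at h
        have hE : (x+1)*(c*b*a) + x*((c+1)*(b+1)*(a+1)) = x^2 + x := by
          linear_combination h - (x+1)*e3 - x*f3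
        have h4 := congrArg (fun y : F => y ^ q) hE
        simp only [hfrob, mul_pow, one_pow, hpow2] at h4
        rw [← ha, ← hb, ← hc, hcx] at h4
        have key : (a - x)^2 * ((b - x) * (c - x)) = 0 := by
          linear_combination
            (a + a*c + a*b + a*b*c + a^2 + x*b*c + x*a + x*a*c + x*a*b + x^2) * hE
            + (a*b*c + x + x*c + x*b + x*b*c + x*a + x*a*c + x*a*b) * h4
            + ((-2:F)*x*a^2*b + (-2:F)*x*a^2*c + (-4:F)*x*a*b*c + (-1:F)*x^3*a
              + (-1:F)*x^3*b + (-1:F)*x^3*c + x^4 + (-5:F)*x*a^2*b*c + (-1:F)*x*a*c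
              + (-1:F)*x*a*b + (-3:F)*x*a^2*b*c^2 + (-1:F)*a^2*b*c^2
              + (-2:F)*x*a*b*c^2 + (-1:F)*x*a^2*c^2 + (-1:F)*x*a*c^2
              + (-3:F)*x*a^2*b^2*c + (-1:F)*a^2*b^2*c + (-2:F)*x*a*b^2*c
              + (-1:F)*x*a^2*b^2 + (-1:F)*x*a*b^2 + (-2:F)*x*a^2*b^2*c^2
              + (-1:F)*a^2*b^2*c^2 + (-2:F)*x*a*b^2*c^2 + (-5:F)*x^2*a*b*c
              + (-1:F)*x*a^3*b*c + (-2:F)*x^2*a*b^2*c^2 + (-1:F)*x^2*b^2*c^2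
              + (-3:F)*x^2*a*b*c^2 + (-1:F)*x^2*b*c^2 + (-3:F)*x^2*a*b^2*c
              + (-1:F)*x^2*b^2*c + (-4:F)*x^2*a^2*b*c + (-2:F)*x^2*a^2*c
              + (-2:F)*x^2*a^2*b + (-2:F)*x^2*a^2*b*c^2 + (-1:F)*x^2*a^2*c^2
              + (-1:F)*x^2*a*c^2 + (-2:F)*x^2*a^2*b^2*c + (-1:F)*x^2*a^2*b^2
              + (-1:F)*x^2*a*b^2 + (-1:F)*x^3*a*b*c) * two
        have hcases : a - x = 0 ∨ (b - x = 0 ∨ c - x = 0) := by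
          rcases mul_eq_zero.mp key with hk | hk
          · exact Or.inl (pow_eq_zero_iff (by norm_num : (2:ℕ) ≠ 0) |>.mp hk)
          · exact Or.inr (mul_eq_zero.mp hk)
        rw [hbx]
        rcases hcases with hk | hk | hk
        · have hax : a = x := by linear_combination hk
          rw [hb, hax, ← ha, hax]
        · linear_combination hk
        · have hcxx : c = x := by linear_combination hk
          have hax : a = x := by rw [← hcx, hcxx, ← ha]
          rw [hb, hax, ← ha, hax]
      · intro hb0
        have hbeq : b = x := by rw [← hbx]; exact hb0
        have hca : c = a := by rw [hc, hbeq, ← ha]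
        have hE : (x+1)*(c*b*a) + x*((c+1)*(b+1)*(a+1)) = x^2 + x := by
          rw [hca, hbeq]
          linear_combination (x^2*a^2 + x*a^2 + x^2*a + x*a) * two
        refine mul_left_cancel₀ (mul_ne_zero hx0 hxx1) ?_
        rw [mul_one]
        linear_combination hE + (x+1)*e3 + x*f3
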